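/- Every vector γ ∈ ℤ^E can be written as γ = γ₀ + u + v, where γ₀ ∈ ℤ^E has all coordinates in {−1, 0, 1}, u ∈ Λ_A, and v ∈ Λ*_A; in other words, every coset of ℤ^E/(Λ_A + Λ*_A) contains a representative whose coefficients are all 1, 0 or −1. -/

import Mathlib

open Matrix

/-- A vector with all entries in `{-1,0,1}`. -/
def SignVec {m : ℕ} (C : Fin m → ℤ) : Prop := ∀ e, C e = -1 ∨ C e = 0 ∨ C e = 1


lemma castMulVec {ι : Type*} [Fintype ι] {n : ℕ} (M : Matrix ι (Fin n) ℤ) (v : Fin n → ℤ) (i : ι) :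
    (M.map ((↑) : ℤ → ℝ)).mulVec (fun j => (v j : ℝ)) i = ((M.mulVec v i : ℤ) : ℝ) := by
  simp [Matrix.mulVec, dotProduct]

lemma unitRowVal {ι : Type*} [Fintype ι] {n : ℕ} (M : Matrix ι (Fin n) ℤ) {i : ι} {j : Fin n}
    (hij : M i = Pi.single j 1) (w : Fin n → ℝ) :
    (M.map ((↑) : ℤ → ℝ)).mulVec w i = w j := by
  simp [Matrix.mulVec, dotProduct, hij, Pi.single_apply]

lemma rowpick {α : Type*} [Fintype α] [DecidableEq α] {k : ℕ} (R : Matrix α (Fin k) ℝ) :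
    (∃ z : Fin k → ℝ, z ≠ 0 ∧ R.mulVec z = 0) ∨
    (∃ f : Fin k → α, Function.Injective f ∧ (R.submatrix f id).det ≠ 0) := by
  by_cases hker : ∃ z : Fin k → ℝ, z ≠ 0 ∧ R.mulVec z = 0
  · exact Or.inl hker
  right
  push_neg at hker
  have hkerb : ∀ v, R.mulVec v = 0 → v = 0 := by
    intro v hv
    by_contra hv0
    exact hker v hv0 hv
  have hinj : LinearMap.ker R.mulVecLin = ⊥ := Matrix.ker_mulVecLin_eq_bot_iff.mpr hkerb
  have hrankR : R.rank = k := by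
    rw [Matrix.rank, LinearMap.finrank_range_of_inj (LinearMap.ker_eq_bot.mp hinj)]
    simp [Module.finrank_pi]
  have hrankT : Rᵀ.rank = k := by rw [Matrix.rank_transpose]; exact hrankR
  have hspan : Submodule.span ℝ (Set.range (fun i : α => R i)) = ⊤ := by
    apply Submodule.eq_top_of_finrank_eq
    have h2 := Rᵀ.rank_eq_finrank_span_cols
    change Rᵀ.rank = Module.finrank ℝ (Submodule.span ℝ (Set.range (fun i : α => R i))) at h2
    rw [← h2, hrankT]
    simp [Module.finrank_pi]
  obtain ⟨t, hts, htspan, htli⟩ := exists_linearIndependent ℝ (Set.range (fun i : α => R i))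
  rw [hspan] at htspan
  let b : Module.Basis t ℝ (Fin k → ℝ) := Module.Basis.mk htli (by rw [Subtype.range_coe, htspan])
  haveI : Fintype t := FiniteDimensional.fintypeBasisIndex b
  have hcard : Fintype.card t = k := by
    have hc := Module.finrank_eq_card_basis b
    rw [Module.finrank_fin_fun] at hc
    omega
  let e : Fin k ≃ t := (Fintype.equivFinOfCardEq hcard).symm
  have hchoose : ∀ x : t, ∃ i : α, R i = (x : Fin k → ℝ) := fun x => hts x.2
  choose g hg using hchoose
  refine ⟨fun a => g (e a), ?_, ?_⟩
  · intro a a' haa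
    have hval : ((e a : t) : Fin k → ℝ) = ((e a' : t) : Fin k → ℝ) := by
      rw [← hg (e a), ← hg (e a')]
      exact congrArg R haa
    exact e.injective (Subtype.ext hval)
  · have hrows : LinearIndependent ℝ (fun a : Fin k => (R.submatrix (fun a => g (e a)) id) a) := by
      have heq : (fun a : Fin k => (R.submatrix (fun a => g (e a)) id) a)
          = (fun x : t => (x : Fin k → ℝ)) ∘ (fun a => e a) := by
        funext a
        ext j
        simp [Matrix.submatrix_apply]
        rw [hg (e a)]
      rw [heq]
      exact htli.comp (fun a => e a) (fun a a' h => e.injective h)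
    have hu : IsUnit (R.submatrix (fun a => g (e a)) id) :=
      Matrix.linearIndependent_rows_iff_isUnit.mp hrows
    have hdet := (Matrix.isUnit_iff_isUnit_det _).mp hu
    exact hdet.ne_zero

lemma hkbox {ι : Type*} [Fintype ι] [DecidableEq ι] {n : ℕ} (M : Matrix ι (Fin n) ℤ)
    (hTU : M.IsTotallyUnimodular)
    (hunit : ∀ j : Fin n, ∃ i : ι, M i = Pi.single j 1)
    (lo hi : ι → ℤ) (x : Fin n → ℝ)
    (hfeas : ∀ i, (lo i : ℝ) ≤ (M.map ((↑) : ℤ → ℝ)).mulVec x i ∧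
      (M.map ((↑) : ℤ → ℝ)).mulVec x i ≤ (hi i : ℝ)) :
    ∃ z : Fin n → ℤ, ∀ i, lo i ≤ M.mulVec z i ∧ M.mulVec z i ≤ hi i := by
  classical
  set Mr := M.map ((↑) : ℤ → ℝ) with hMr
  suffices key : ∀ N : ℕ, ∀ x : Fin n → ℝ,
      (Finset.univ.filter (fun i => ¬∃ c : ℤ, Mr.mulVec x i = (c : ℝ))).card ≤ N →
      (∀ i, (lo i : ℝ) ≤ Mr.mulVec x i ∧ Mr.mulVec x i ≤ (hi i : ℝ)) →
      ∃ z : Fin n → ℤ, ∀ i, lo i ≤ M.mulVec z i ∧ M.mulVec z i ≤ hi i by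
    exact key _ x le_rfl hfeas
  intro N
  induction N with
  | zero =>
    intro x hcard hfeas2
    have hall : ∀ i, ∃ c : ℤ, Mr.mulVec x i = (c : ℝ) := by
      intro i
      by_contra hc
      have hmem : i ∈ Finset.univ.filter (fun i => ¬∃ c : ℤ, Mr.mulVec x i = (c : ℝ)) := by
        simp only [Finset.mem_filter, Finset.mem_univ, true_and]
        exact hc
      rw [Finset.card_eq_zero.mp (Nat.le_zero.mp hcard)] at hmem
      exact absurd hmem (Finset.notMem_empty i)
    have hxz : ∀ j, ∃ c : ℤ, x j = (c : ℝ) := by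
      intro j
      obtain ⟨i, hi⟩ := hunit j
      obtain ⟨c, hc⟩ := hall i
      exact ⟨c, by rw [← unitRowVal M hi x, ← hMr, hc]⟩
    choose z hz using hxz
    refine ⟨z, fun i => ?_⟩
    have hx : x = fun j => ((z j : ℤ) : ℝ) := funext hz
    have hcast : Mr.mulVec x i = ((M.mulVec z i : ℤ) : ℝ) := by
      rw [hx, hMr]; exact castMulVec M z i
    obtain ⟨h1, h2⟩ := hfeas2 i
    rw [hcast] at h1 h2
    exact ⟨by exact_mod_cast h1, by exact_mod_cast h2⟩
  | succ N ih =>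
    intro x hcard hfeas2
    by_cases hN : (Finset.univ.filter (fun i => ¬∃ c : ℤ, Mr.mulVec x i = (c : ℝ))).card ≤ N
    · exact ih x hN hfeas2
    set Fr := Finset.univ.filter (fun i => ¬∃ c : ℤ, Mr.mulVec x i = (c : ℝ)) with hFrdef
    have hFrne : Fr.Nonempty := Finset.card_pos.mp (by omega)
    by_cases hEx : ∃ h : Fin n → ℝ, (∀ i, i ∉ Fr → Mr.mulVec h i = 0) ∧
        (∃ i₀, i₀ ∈ Fr ∧ Mr.mulVec h i₀ ≠ 0)
    · obtain ⟨h, hT0, i₀, hi₀Fr, hi₀⟩ := hEx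
      set dv := Mr.mulVec h with hdv
      set val := Mr.mulVec x with hval
      have hFrmem : ∀ i, i ∈ Fr ↔ ¬∃ c : ℤ, val i = (c : ℝ) := by
        intro i; rw [hFrdef]; simp only [Finset.mem_filter, Finset.mem_univ, true_and]
      have hfracl : ∀ i ∈ Fr, (⌊val i⌋ : ℝ) < val i ∧ val i < (⌈val i⌉ : ℝ) := by
        intro i hi
        have hne : ∀ c : ℤ, val i ≠ (c : ℝ) := by
          have := (hFrmem i).mp hi; push_neg at this; exact this
        constructor
        · exact lt_of_le_of_ne (Int.floor_le _) (fun hh => hne ⌊val i⌋ hh.symm)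
        · exact lt_of_le_of_ne (Int.le_ceil _) (hne ⌈val i⌉)
      set t : ι → ℝ := fun i =>
        if 0 < dv i then ((⌈val i⌉ : ℝ) - val i) / dv i else ((⌊val i⌋ : ℝ) - val i) / dv i with ht
      set S : Finset ι := Fr.filter (fun i => dv i ≠ 0) with hS
      have hSne : S.Nonempty := ⟨i₀, by rw [hS, Finset.mem_filter]; exact ⟨hi₀Fr, hi₀⟩⟩
      have htpos : ∀ i ∈ S, 0 < t i := by
        intro i hiS
        rw [hS, Finset.mem_filter] at hiS
        obtain ⟨hiFr, hdvi⟩ := hiS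
        obtain ⟨hfl, hcl⟩ := hfracl i hiFr
        by_cases hdpos : 0 < dv i
        · rw [ht]; simp only [if_pos hdpos]; exact div_pos (by linarith) hdpos
        · have hdneg : dv i < 0 := lt_of_le_of_ne (not_lt.mp hdpos) hdvi
          rw [ht]; simp only [if_neg hdpos]
          exact div_pos_of_neg_of_neg (by linarith) hdneg
      obtain ⟨istar, histarS, hmin⟩ := S.exists_min_image t hSne
      have histarFr : istar ∈ Fr := (Finset.mem_filter.mp histarS).1
      have hdvstar : dv istar ≠ 0 := (Finset.mem_filter.mp histarS).2
      set ts := t istar with hts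
      have htspos : 0 < ts := htpos istar histarS
      set x' := x + ts • h with hx'
      have hval' : ∀ i, Mr.mulVec x' i = val i + ts * dv i := by
        intro i
        rw [hx', Matrix.mulVec_add, Matrix.mulVec_smul]
        simp [hval, hdv, smul_eq_mul]
      have hsame : ∀ i, i ∉ Fr → Mr.mulVec x' i = val i := by
        intro i hi; rw [hval' i, hT0 i hi]; ring
      have hbnd : ∀ i ∈ Fr, (⌊val i⌋ : ℝ) ≤ Mr.mulVec x' i ∧ Mr.mulVec x' i ≤ (⌈val i⌉ : ℝ) := by
        intro i hiFr
        obtain ⟨hfl, hcl⟩ := hfracl i hiFr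
        rw [hval' i]
        by_cases hdvi : dv i = 0
        · rw [hdvi]; constructor <;> [linarith; linarith]
        · have hiS : i ∈ S := by rw [hS, Finset.mem_filter]; exact ⟨hiFr, hdvi⟩
          have htsle : ts ≤ t i := hmin i hiS
          by_cases hdpos : 0 < dv i
          · have h1 : ts * dv i ≤ t i * dv i := mul_le_mul_of_nonneg_right htsle (le_of_lt hdpos)
            have h2 : t i * dv i = (⌈val i⌉ : ℝ) - val i := by
              rw [ht]; simp only [if_pos hdpos]; field_simp
            have h3 : 0 ≤ ts * dv i := le_of_lt (mul_pos htspos hdpos)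
            constructor <;> [linarith; linarith]
          · have hdneg : dv i < 0 := lt_of_le_of_ne (not_lt.mp hdpos) hdvi
            have h1 : t i * dv i ≤ ts * dv i := mul_le_mul_of_nonpos_right htsle (le_of_lt hdneg)
            have h2 : t i * dv i = (⌊val i⌋ : ℝ) - val i := by
              rw [ht]; simp only [if_neg hdpos]; field_simp
            have h3 : ts * dv i ≤ 0 := le_of_lt (mul_neg_of_pos_of_neg htspos hdneg)
            constructor <;> [linarith; linarith]
      have histarint : ∃ c : ℤ, Mr.mulVec x' istar = (c : ℝ) := by
        rw [hval' istar]
        by_cases hdpos : 0 < dv istar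
        · refine ⟨⌈val istar⌉, ?_⟩
          rw [hts, ht]; simp only [if_pos hdpos]; field_simp
          ring
        · refine ⟨⌊val istar⌋, ?_⟩
          rw [hts, ht]; simp only [if_neg hdpos]; field_simp
          ring
      have hsub : (Finset.univ.filter (fun i => ¬∃ c : ℤ, Mr.mulVec x' i = (c : ℝ)))
          ⊆ Fr.erase istar := by
        intro i hi
        rw [Finset.mem_filter] at hi
        have hi2 := hi.2
        rw [Finset.mem_erase]
        constructor
        · rintro rfl; exact hi2 histarint
        · by_contra hiFr
          apply hi2
          obtain ⟨c, hc⟩ : ∃ c : ℤ, val i = (c : ℝ) := by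
            by_contra hc; exact hiFr ((hFrmem i).mpr hc)
          exact ⟨c, by rw [hsame i hiFr, hc]⟩
      have hcard' : (Finset.univ.filter (fun i => ¬∃ c : ℤ, Mr.mulVec x' i = (c : ℝ))).card ≤ N := by
        have h1 := Finset.card_le_card hsub
        have h2 : (Fr.erase istar).card = Fr.card - 1 := Finset.card_erase_of_mem histarFr
        -- hcard already in terms of Fr
        omega
      apply ih x' hcard'
      intro i
      by_cases hiFr : i ∈ Fr
      · obtain ⟨hb1, hb2⟩ := hbnd i hiFr
        obtain ⟨hf1, hf2⟩ := hfeas2 i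
        have hlf : (lo i : ℝ) ≤ (⌊val i⌋ : ℝ) := by exact_mod_cast Int.le_floor.mpr hf1
        have hcf : ((⌈val i⌉ : ℝ)) ≤ (hi i : ℝ) := by exact_mod_cast Int.ceil_le.mpr hf2
        exact ⟨le_trans hlf hb1, le_trans hb2 hcf⟩
      · rw [hsame i hiFr]
        exact hfeas2 i
    · exfalso
      push_neg at hEx
      set val := Mr.mulVec x with hval
      set F : Finset (Fin n) := Finset.univ.filter (fun j => ¬∃ c : ℤ, x j = (c : ℝ)) with hF
      have hFmem : ∀ j, j ∈ F ↔ ¬∃ c : ℤ, x j = (c : ℝ) := by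
        intro j; rw [hF]; simp only [Finset.mem_filter, Finset.mem_univ, true_and]
      have hFrmem : ∀ i, i ∈ Fr ↔ ¬∃ c : ℤ, val i = (c : ℝ) := by
        intro i; rw [hFrdef]; simp only [Finset.mem_filter, Finset.mem_univ, true_and]
      have hFne : F.Nonempty := by
        by_contra hFe
        rw [Finset.not_nonempty_iff_eq_empty] at hFe
        have hxz : ∀ j, ∃ c : ℤ, x j = (c : ℝ) := by
          intro j
          by_contra hc
          have : j ∈ F := (hFmem j).mpr hc
          rw [hFe] at this
          exact absurd this (Finset.notMem_empty j)
        choose ξ hξ using hxz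
        obtain ⟨i₁, hi₁⟩ := hFrne
        apply (hFrmem i₁).mp hi₁
        refine ⟨M.mulVec ξ i₁, ?_⟩
        rw [hval, show x = fun j => ((ξ j : ℤ) : ℝ) from funext hξ, hMr]
        exact castMulVec M ξ i₁
      set k := F.card with hk
      have hkpos : 0 < k := Finset.card_pos.mpr hFne
      set eF : Fin k ≃ {j // j ∈ F} := F.equivFin.symm with heF
      set R : Matrix {i // i ∉ Fr} (Fin k) ℝ := fun i b => Mr i.1 (eF b).1 with hR
      have hsum : ∀ (w : Fin k → ℝ) (i : ι),
          Mr.mulVec (fun j => if hj : j ∈ F then w (eF.symm ⟨j, hj⟩) else 0) i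
            = ∑ b : Fin k, Mr i (eF b).1 * w b := by
        intro w i
        rw [Matrix.mulVec, dotProduct]
        calc (∑ j : Fin n, Mr i j * (if hj : j ∈ F then w (eF.symm ⟨j, hj⟩) else 0))
            = ∑ j ∈ F, Mr i j * (if hj : j ∈ F then w (eF.symm ⟨j, hj⟩) else 0) := by
              refine (Finset.sum_subset (Finset.subset_univ F) ?_).symm
              intro j _ hjF
              rw [dif_neg hjF, mul_zero]
          _ = ∑ a ∈ F.attach, Mr i a.1 * (if hj : (a : Fin n) ∈ F then w (eF.symm ⟨a.1, hj⟩) else 0) :=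
              (Finset.sum_attach F _).symm
          _ = ∑ a : {j // j ∈ F}, Mr i a.1 * w (eF.symm a) := by
              rw [← Finset.univ_eq_attach]
              apply Finset.sum_congr rfl
              intro a _
              rw [dif_pos a.2]
          _ = ∑ b : Fin k, Mr i (eF b).1 * w (eF.symm (eF b)) := (Equiv.sum_comp eF _).symm
          _ = ∑ b : Fin k, Mr i (eF b).1 * w b := by simp
      rcases rowpick R with ⟨z, hz0, hzker⟩ | ⟨f, hfinj, hfdet⟩
      · set h : Fin n → ℝ := fun j => if hj : j ∈ F then z (eF.symm ⟨j, hj⟩) else 0 with hh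
        have hout : ∀ i, i ∉ Fr → Mr.mulVec h i = 0 := by
          intro i hi
          rw [hh, hsum z i]
          have hzk := congrFun hzker ⟨i, hi⟩
          simpa [Matrix.mulVec, dotProduct, hR] using hzk
        have hall0 : ∀ i, Mr.mulVec h i = 0 := by
          intro i
          by_cases hi : i ∈ Fr
          · exact hEx h hout i hi
          · exact hout i hi
        obtain ⟨b₀, hb₀⟩ := Function.ne_iff.mp hz0
        obtain ⟨iu, hiu⟩ := hunit (eF b₀).1
        have huv : Mr.mulVec h iu = h (eF b₀).1 := by
          rw [hMr]; exact unitRowVal M hiu h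
        apply hb₀
        have h0 := hall0 iu
        rw [huv, hh] at h0
        simp only [dif_pos (eF b₀).2] at h0
        rwa [show (⟨(eF b₀).1, (eF b₀).2⟩ : {j // j ∈ F}) = eF b₀ from Subtype.ext rfl,
          Equiv.symm_apply_apply] at h0
      · set g : Fin k → Fin n := fun b => (eF b).1 with hg
        have hginj : Function.Injective g := by
          intro b b' hbb
          exact eF.injective (Subtype.ext hbb)
        set fι : Fin k → ι := fun a => (f a).1 with hfι
        have hfιinj : Function.Injective fι := by
          intro a a' haa
          exact hfinj (Subtype.ext haa)
        set B : Matrix (Fin k) (Fin k) ℤ := M.submatrix fι g with hB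
        have hRB : R.submatrix f id = B.map ((↑) : ℤ → ℝ) := by
          ext a b
          simp [hR, hB, hMr, hfι, hg]
          rfl
        have hdetcast : ((B.det : ℤ) : ℝ) = (B.map ((↑) : ℤ → ℝ)).det := by
          exact RingHom.map_det (Int.castRingHom ℝ) B
        have hdetB : B.det = 1 ∨ B.det = -1 := by
          obtain ⟨s, hs⟩ := hTU k fι g hfιinj hginj
          rw [← hB] at hs
          rcases s with _ | _ | _
          · exfalso
            apply hfdet
            rw [hRB, ← hdetcast, ← hs]
            simp
          · right; rw [← hs]; simp
          · left; rw [← hs]; simp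
        have hxi : ∀ j, ∃ c : ℤ, j ∉ F → x j = (c : ℝ) := by
          intro j
          by_cases hj : j ∈ F
          · exact ⟨0, fun hc => absurd hj hc⟩
          · have hex : ∃ c : ℤ, x j = (c : ℝ) := by
              by_contra hc
              exact hj ((hFmem j).mpr hc)
            obtain ⟨c, hc⟩ := hex
            exact ⟨c, fun _ => hc⟩
        choose ξ0 hξ0 using hxi
        set ξ : Fin n → ℤ := fun j => if j ∈ F then 0 else ξ0 j with hξ
        have hvi : ∀ i, ∃ c : ℤ, i ∉ Fr → val i = (c : ℝ) := by
          intro i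
          by_cases hi : i ∈ Fr
          · exact ⟨0, fun hc => absurd hi hc⟩
          · have hex : ∃ c : ℤ, val i = (c : ℝ) := by
              by_contra hc
              exact hi ((hFrmem i).mpr hc)
            obtain ⟨c, hc⟩ := hex
            exact ⟨c, fun _ => hc⟩
        choose cc hcc using hvi
        set d : Fin k → ℤ := fun a => cc (fι a) - M.mulVec ξ (fι a) with hd
        set w : Fin k → ℝ := fun b => x (g b) with hw
        have hxsplit : x = (fun j => if hj : j ∈ F then w (eF.symm ⟨j, hj⟩) else 0)
            + (fun j => ((ξ j : ℤ) : ℝ)) := by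
          funext j
          by_cases hj : j ∈ F
          · simp only [Pi.add_apply, dif_pos hj, hξ, if_pos hj, Int.cast_zero, add_zero]
            have hwx : w (eF.symm ⟨j, hj⟩) = x j := by
              rw [hw]
              simp only [hg]
              rw [Equiv.apply_symm_apply]
            rw [hwx]
          · simp only [Pi.add_apply, dif_neg hj, hξ, if_neg hj, zero_add]
            exact hξ0 j hj
        have hBw : (B.map ((↑) : ℤ → ℝ)).mulVec w = fun a => ((d a : ℤ) : ℝ) := by
          funext a
          have hBwa : (B.map ((↑) : ℤ → ℝ)).mulVec w a = ∑ b : Fin k, Mr (fι a) (eF b).1 * w b := by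
            simp [Matrix.mulVec, dotProduct, hB, hMr, hfι, hg]
          have hvala : val (fι a) = ∑ b : Fin k, Mr (fι a) (eF b).1 * w b
              + ((M.mulVec ξ (fι a) : ℤ) : ℝ) := by
            rw [hval, hxsplit, Matrix.mulVec_add]
            simp only [Pi.add_apply]
            rw [hsum w (fι a)]
            congr 1
            rw [hMr]
            exact castMulVec M ξ (fι a)
          have hccval : val (fι a) = ((cc (fι a) : ℤ) : ℝ) := hcc (fι a) (f a).2
          rw [hBwa, hd]
          push_cast
          rw [← hccval, hvala]
          ring
        have hadjcast : (B.map ((↑) : ℤ → ℝ)).adjugate = (B.adjugate).map ((↑) : ℤ → ℝ) := by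
          have hmap := RingHom.map_adjugate (Int.castRingHom ℝ) B
          simpa [RingHom.mapMatrix_apply] using hmap.symm
        set b0 : Fin k := ⟨0, hkpos⟩ with hb0
        have hfrac : ¬∃ c : ℤ, x (g b0) = (c : ℝ) := (hFmem (g b0)).mp (eF b0).2
        apply hfrac
        have hsolve : ((B.map ((↑) : ℤ → ℝ)).adjugate).mulVec ((B.map ((↑) : ℤ → ℝ)).mulVec w) b0
            = ((B.map ((↑) : ℤ → ℝ)).det) * w b0 := by
          rw [Matrix.mulVec_mulVec, Matrix.adjugate_mul, Matrix.smul_mulVec,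
            Matrix.one_mulVec]
          simp [smul_eq_mul]
        rw [hBw, hadjcast, ← hdetcast] at hsolve
        have hlcast : ((B.adjugate.map ((↑) : ℤ → ℝ)).mulVec (fun a => ((d a : ℤ) : ℝ))) b0
            = ((B.adjugate.mulVec d b0 : ℤ) : ℝ) := castMulVec B.adjugate d b0
        rw [hlcast] at hsolve
        have hwb0 : x (g b0) = w b0 := rfl
        rcases hdetB with hε | hε
        · refine ⟨B.adjugate.mulVec d b0, ?_⟩
          rw [hε] at hsolve
          rw [hwb0]
          push_cast at hsolve ⊢
          linarith [hsolve]
        · refine ⟨-(B.adjugate.mulVec d b0), ?_⟩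
          rw [hε] at hsolve
          rw [hwb0]
          push_cast at hsolve ⊢
          linarith [hsolve]

/-- Every coset of `ℤ^E/(Λ_A + Λ*_A)` contains a representative with all coefficients in
`{-1,0,1}`: every `γ ∈ ℤ^E` can be written `γ = γ₀ + u + v` with `γ₀` a `{-1,0,1}`-vector,
`u ∈ Λ_A = ker A ∩ ℤ^E` and `v ∈ Λ*_A = Aᵀℤ^r`. -/
theorem stmt13 {r m : ℕ} (A : Matrix (Fin r) (Fin m) ℤ)
    (hTU : A.IsTotallyUnimodular) (hrank : (A.map ((↑) : ℤ → ℝ)).rank = r)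
    (γ : Fin m → ℤ) :
    ∃ γ₀ u v : Fin m → ℤ, SignVec γ₀ ∧ A.mulVec u = 0 ∧
      (∃ y : Fin r → ℤ, v = Matrix.vecMul y A) ∧ γ = γ₀ + u + v := by
  classical
  set Ar : Matrix (Fin r) (Fin m) ℝ := A.map ((↑) : ℤ → ℝ) with hAr
  -- `Arᵀ` has trivial kernel
  have hkerT : ∀ v : Fin r → ℝ, Arᵀ.mulVec v = 0 → v = 0 := by
    have hrT : Arᵀ.rank = r := by rw [Matrix.rank_transpose]; exact hrank
    have hfin := LinearMap.finrank_range_add_finrank_ker (Arᵀ).mulVecLin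
    have hdom : Module.finrank ℝ (Fin r → ℝ) = r := by simp [Module.finrank_pi]
    rw [hdom] at hfin
    have hrdef : Arᵀ.rank = Module.finrank ℝ (LinearMap.range (Arᵀ).mulVecLin) := rfl
    have hker0 : Module.finrank ℝ (LinearMap.ker (Arᵀ).mulVecLin) = 0 := by
      rw [hrdef] at hrT; omega
    have hbot : LinearMap.ker (Arᵀ).mulVecLin = ⊥ := Submodule.finrank_eq_zero.mp hker0
    intro v hv
    have : v ∈ LinearMap.ker (Arᵀ).mulVecLin := by
      rw [LinearMap.mem_ker, Matrix.mulVecLin_apply]; exact hv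
    rwa [hbot, Submodule.mem_bot] at this
  have hAATinj : Function.Injective (Ar * Arᵀ).mulVec := by
    have h0 : ∀ v, (Ar * Arᵀ).mulVec v = 0 → v = 0 := by
      intro v hv
      apply hkerT
      have h1 : v ⬝ᵥ ((Ar * Arᵀ).mulVec v) = 0 := by rw [hv]; simp
      rw [← Matrix.mulVec_mulVec, Matrix.dotProduct_mulVec, ← Matrix.mulVec_transpose] at h1
      exact dotProduct_self_eq_zero.mp h1
    have hbot : LinearMap.ker (Ar * Arᵀ).mulVecLin = ⊥ := Matrix.ker_mulVecLin_eq_bot_iff.mpr h0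
    have := LinearMap.ker_eq_bot.mp hbot
    exact this
  have hAATsurj : Function.Surjective (Ar * Arᵀ).mulVec :=
    Matrix.mulVec_surjective_iff_isUnit.mpr (Matrix.mulVec_injective_iff_isUnit.mp hAATinj)
  obtain ⟨ys, hys⟩ := hAATsurj (Ar.mulVec (fun e => (γ e : ℝ)))
  set q := Arᵀ.mulVec ys with hq
  set p := (fun e => (γ e : ℝ)) - q with hp
  have hAp : Ar.mulVec p = 0 := by
    rw [hp, Matrix.mulVec_sub]
    rw [hq, Matrix.mulVec_mulVec] at *
    rw [hys]
    simp
  -- Step B : find u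
  have hTUB : (Matrix.fromRows A (1 : Matrix (Fin m) (Fin m) ℤ)).IsTotallyUnimodular :=
    hTU.fromRows_one
  have hunitB : ∀ j : Fin m, ∃ i : Fin r ⊕ Fin m,
      (Matrix.fromRows A (1 : Matrix (Fin m) (Fin m) ℤ)) i = Pi.single j 1 := by
    intro j
    refine ⟨Sum.inr j, ?_⟩
    funext j'
    rw [Matrix.fromRows_apply_inr]
    simp [Matrix.one_apply, Pi.single_apply, eq_comm]
  have hmapB : (Matrix.fromRows A (1 : Matrix (Fin m) (Fin m) ℤ)).map ((↑) : ℤ → ℝ)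
      = Matrix.fromRows Ar (1 : Matrix (Fin m) (Fin m) ℝ) := by
    ext i j
    cases i with
    | inl i => simp [Matrix.map_apply, hAr]
    | inr i => simp [Matrix.map_apply, Matrix.one_apply, apply_ite]
  obtain ⟨u, hu⟩ := hkbox (Matrix.fromRows A (1 : Matrix (Fin m) (Fin m) ℤ)) hTUB hunitB
    (Sum.elim 0 (fun j => ⌊p j⌋)) (Sum.elim 0 (fun j => ⌈p j⌉)) p (by
      intro i
      rw [hmapB, Matrix.fromRows_mulVec]
      cases i with
      | inl i =>
        have : Ar.mulVec p i = 0 := congrFun hAp i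
        simp [this]
      | inr j =>
        simp [Matrix.one_mulVec, Int.floor_le, Int.le_ceil])
  have hAu : A.mulVec u = 0 := by
    funext i
    have h1 := hu (Sum.inl i)
    have h2 : (0:ℤ) ≤ (Matrix.fromRows A (1 : Matrix (Fin m) (Fin m) ℤ)).mulVec u (Sum.inl i) ∧
        (Matrix.fromRows A (1 : Matrix (Fin m) (Fin m) ℤ)).mulVec u (Sum.inl i) ≤ 0 := by simpa using h1
    rw [Matrix.fromRows_mulVec] at h2
    simp only [Sum.elim_inl, Pi.zero_apply] at h2
    show (A.mulVec u) i = (0 : ℤ)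
    omega
  have hufl : ∀ j, ⌊p j⌋ ≤ u j ∧ u j ≤ ⌈p j⌉ := by
    intro j
    have h1 := hu (Sum.inr j)
    rw [Matrix.fromRows_mulVec, Matrix.one_mulVec] at h1
    simpa using h1
  -- Step A : find v
  have hTUA : (Matrix.fromRows Aᵀ (1 : Matrix (Fin r) (Fin r) ℤ)).IsTotallyUnimodular :=
    hTU.transpose.fromRows_one
  have hunitA : ∀ j : Fin r, ∃ i : Fin m ⊕ Fin r,
      (Matrix.fromRows Aᵀ (1 : Matrix (Fin r) (Fin r) ℤ)) i = Pi.single j 1 := by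
    intro j
    refine ⟨Sum.inr j, ?_⟩
    funext j'
    rw [Matrix.fromRows_apply_inr]
    simp [Matrix.one_apply, Pi.single_apply, eq_comm]
  have hmapA : (Matrix.fromRows Aᵀ (1 : Matrix (Fin r) (Fin r) ℤ)).map ((↑) : ℤ → ℝ)
      = Matrix.fromRows Arᵀ (1 : Matrix (Fin r) (Fin r) ℝ) := by
    ext i j
    cases i with
    | inl i => simp [Matrix.map_apply, hAr]
    | inr i => simp [Matrix.map_apply, Matrix.one_apply, apply_ite]
  obtain ⟨y₀, hy₀⟩ := hkbox (Matrix.fromRows Aᵀ (1 : Matrix (Fin r) (Fin r) ℤ)) hTUA hunitA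
    (Sum.elim (fun e => ⌊q e⌋) (fun i => ⌊ys i⌋)) (Sum.elim (fun e => ⌈q e⌉) (fun i => ⌈ys i⌉))
    ys (by
      intro i
      rw [hmapA, Matrix.fromRows_mulVec]
      cases i with
      | inl e => simp [hq, Int.floor_le, Int.le_ceil]
      | inr i => simp [Matrix.one_mulVec, Int.floor_le, Int.le_ceil])
  set v : Fin m → ℤ := Aᵀ.mulVec y₀ with hv
  have hvfl : ∀ e, ⌊q e⌋ ≤ v e ∧ v e ≤ ⌈q e⌉ := by
    intro e
    have h1 := hy₀ (Sum.inl e)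
    rw [Matrix.fromRows_mulVec] at h1
    simpa [hv] using h1
  refine ⟨γ - u - v, u, v, ?_, hAu, ⟨y₀, Matrix.mulVec_transpose A y₀⟩, by ring⟩
  intro e
  have hcast : (((γ - u - v) e : ℤ) : ℝ) = (p e - u e) + (q e - v e) := by
    have hpe : p e = (γ e : ℝ) - q e := by rw [hp]; simp
    simp only [Pi.sub_apply]
    push_cast
    rw [hpe]
    ring
  have hb1 : (⌊p e⌋ : ℝ) ≤ (u e : ℝ) := by exact_mod_cast (hufl e).1
  have hb2 : ((u e : ℤ) : ℝ) ≤ (⌈p e⌉ : ℝ) := by exact_mod_cast (hufl e).2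
  have hb3 : (⌊q e⌋ : ℝ) ≤ (v e : ℝ) := by exact_mod_cast (hvfl e).1
  have hb4 : ((v e : ℤ) : ℝ) ≤ (⌈q e⌉ : ℝ) := by exact_mod_cast (hvfl e).2
  have hf1 : p e - 1 < (⌊p e⌋ : ℝ) := Int.sub_one_lt_floor (p e)
  have hf2 : (⌈p e⌉ : ℝ) < p e + 1 := Int.ceil_lt_add_one (p e)
  have hf3 : q e - 1 < (⌊q e⌋ : ℝ) := Int.sub_one_lt_floor (q e)
  have hf4 : (⌈q e⌉ : ℝ) < q e + 1 := Int.ceil_lt_add_one (q e)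
  have hlt : (((γ - u - v) e : ℤ) : ℝ) < 2 ∧ (-2 : ℝ) < (((γ - u - v) e : ℤ) : ℝ) := by
    rw [hcast]; constructor <;> linarith
  have h2 : (γ - u - v) e < 2 := by exact_mod_cast hlt.1
  have h3 : -2 < (γ - u - v) e := by exact_mod_cast hlt.2
  omega
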